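/- Let ε ∈ ℝ, γ > 0, L ∈ ℝ, T > 0, λ ∈ (0,1) and c_U > 0. Let v, w, φ : [0,T] → ℝ be differentiable and h : [0,T] → ℝ with w ≥ 0, φ ≥ 0 on [0,T], satisfying (i) v'(t) ≤ −ε v(t) − h(t)² + γ² w(t)², (ii) (w²)'(t) ≤ 2L w(t)² + 2 h(t) w(t), and (iii) φ'(t) = −2(L + ε/2) φ(t) − γ (φ(t)² + 1) on [0,T]. Assume moreover γ φ(T) ≥ λ² c_U and let w⁺ ≥ 0 satisfy w⁺ ≤ λ w(T). Then v(T) + c_U (w⁺)² ≤ e^{−εT} (v(0) + γ φ(0) w(0)²). (This is the trajectory-wise form of the post-jump estimate (13) in Proposition 2.1, using condition (11a) that γ₀φ₀(τ) ≥ λ²c_U on [0, T_max] and the jump bound W̃(1,e,−e) ≤ λ W̃(0,e,s).) -/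

import Mathlib

/-- Trajectory-wise form of the post-jump estimate (13) in Proposition 2.1: under the
flow conditions (i)–(iii) on `[0,T]`, the transition condition `γφ(T) ≥ λ²c_U`, and the
jump bound `w⁺ ≤ λ w(T)`, one has `v(T) + c_U (w⁺)² ≤ e^{−εT}(v(0) + γφ(0)w(0)²)`. -/
theorem stmt_10 (ε γ L T lam cU : ℝ) (hγ : 0 < γ) (hT : 0 < T)
    (hlam : lam ∈ Set.Ioo (0 : ℝ) 1) (hcU : 0 < cU)
    (v w φ h v' w' φ' : ℝ → ℝ)
    (hvd : ∀ t ∈ Set.Icc 0 T, HasDerivAt v (v' t) t)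
    (hwd : ∀ t ∈ Set.Icc 0 T, HasDerivAt w (w' t) t)
    (hφd : ∀ t ∈ Set.Icc 0 T, HasDerivAt φ (φ' t) t)
    (hw0 : ∀ t ∈ Set.Icc 0 T, 0 ≤ w t)
    (hφ0 : ∀ t ∈ Set.Icc 0 T, 0 ≤ φ t)
    (hi : ∀ t ∈ Set.Icc 0 T, v' t ≤ -ε * v t - (h t) ^ 2 + γ ^ 2 * (w t) ^ 2)
    (hii : ∀ t ∈ Set.Icc 0 T, 2 * w t * w' t ≤ 2 * L * (w t) ^ 2 + 2 * h t * w t)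
    (hiii : ∀ t ∈ Set.Icc 0 T, φ' t = -2 * (L + ε / 2) * φ t - γ * ((φ t) ^ 2 + 1))
    (htrans : lam ^ 2 * cU ≤ γ * φ T)
    (wplus : ℝ) (hwplus0 : 0 ≤ wplus) (hwplus : wplus ≤ lam * w T) :
    v T + cU * wplus ^ 2 ≤ Real.exp (-ε * T) * (v 0 + γ * φ 0 * (w 0) ^ 2) := by
  set G : ℝ → ℝ := fun t => Real.exp (ε * t) * (v t + γ * φ t * w t ^ 2) with hG
  set G' : ℝ → ℝ := fun t =>
    ε * Real.exp (ε * t) * (v t + γ * φ t * w t ^ 2) +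
      Real.exp (ε * t) * (v' t + γ * (φ' t * w t ^ 2 + φ t * (2 * w t ^ 1 * w' t))) with hG'
  have hGd : ∀ t ∈ Set.Icc 0 T, HasDerivAt G (G' t) t := by
    intro t ht
    have hE : HasDerivAt (fun t => Real.exp (ε * t)) (ε * Real.exp (ε * t)) t := by
      simpa [mul_comm] using ((hasDerivAt_id t).const_mul ε).exp
    have hI : HasDerivAt (fun t => v t + γ * φ t * w t ^ 2)
        (v' t + γ * (φ' t * w t ^ 2 + φ t * (2 * w t ^ 1 * w' t))) t := by
      have := ((hφd t ht).mul ((hwd t ht).pow 2)).const_mul γ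
      exact (hvd t ht).add (by simpa [mul_assoc] using this)
    simpa [hG, hG', Pi.mul_def] using hE.mul hI
  have hG'le : ∀ t ∈ Set.Icc 0 T, G' t ≤ 0 := by
    intro t ht
    have h1 := hi t ht
    have h2 := hii t ht
    have h3 := hiii t ht
    have h4 := hφ0 t ht
    have hexp : 0 < Real.exp (ε * t) := Real.exp_pos _
    have key : v' t + γ * (φ' t * w t ^ 2 + φ t * (2 * w t ^ 1 * w' t))
        ≤ -ε * (v t + γ * φ t * w t ^ 2) - (h t - γ * φ t * w t) ^ 2 := by
      have hmul : γ * φ t * (2 * w t * w' t) ≤ γ * φ t * (2 * L * w t ^ 2 + 2 * h t * w t) :=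
        mul_le_mul_of_nonneg_left h2 (by positivity)
      rw [h3] at *
      nlinarith [sq_nonneg (h t - γ * φ t * w t)]
    have : G' t ≤ ε * Real.exp (ε * t) * (v t + γ * φ t * w t ^ 2) +
        Real.exp (ε * t) * (-ε * (v t + γ * φ t * w t ^ 2) - (h t - γ * φ t * w t) ^ 2) := by
      have := mul_le_mul_of_nonneg_left key hexp.le
      simp only [hG']
      linarith
    calc G' t ≤ _ := this
      _ = -(Real.exp (ε * t) * (h t - γ * φ t * w t) ^ 2) := by ring
      _ ≤ 0 := neg_nonpos.2 (by positivity)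
  have hanti : AntitoneOn G (Set.Icc 0 T) := by
    have hcont : ContinuousOn G (Set.Icc 0 T) := fun t ht =>
      (hGd t ht).continuousAt.continuousWithinAt
    apply antitoneOn_of_deriv_nonpos (convex_Icc 0 T) hcont
    · intro t ht
      rw [interior_Icc] at ht
      exact (hGd t (Set.mem_Icc_of_Ioo ht)).differentiableAt.differentiableWithinAt
    · intro t ht
      rw [interior_Icc] at ht
      rw [(hGd t (Set.mem_Icc_of_Ioo ht)).deriv]
      exact hG'le t (Set.mem_Icc_of_Ioo ht)
  have hGT : G T ≤ G 0 :=
    hanti (Set.left_mem_Icc.2 hT.le) (Set.right_mem_Icc.2 hT.le) hT.le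
  have hTmem : T ∈ Set.Icc (0:ℝ) T := Set.right_mem_Icc.2 hT.le
  have hwT : 0 ≤ w T := hw0 T hTmem
  -- jump estimate: cU * wplus^2 ≤ γ * φ T * (w T)^2
  have hjump : cU * wplus ^ 2 ≤ γ * φ T * w T ^ 2 := by
    have h1 : wplus ^ 2 ≤ (lam * w T) ^ 2 := by nlinarith
    have h2 : cU * (lam * w T) ^ 2 ≤ γ * φ T * w T ^ 2 := by nlinarith [sq_nonneg (w T)]
    nlinarith
  -- unfold G T ≤ G 0
  have hG0 : Real.exp (ε * 0) = 1 := by simp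
  have hexpT : 0 < Real.exp (ε * T) := Real.exp_pos _
  have hmain : Real.exp (ε * T) * (v T + γ * φ T * w T ^ 2)
      ≤ v 0 + γ * φ 0 * w 0 ^ 2 := by simpa [hG, hG0] using hGT
  have hineq : v T + γ * φ T * w T ^ 2
      ≤ Real.exp (-ε * T) * (v 0 + γ * φ 0 * w 0 ^ 2) := by
    rw [neg_mul, Real.exp_neg, inv_mul_eq_div]
    exact (le_div_iff₀' hexpT).2 hmain
  linarith
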